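/- Let N \ge 2, let z_1 > ... > z_N be the zeros of the Hermite polynomial H_N, and let S_N be the N\times N matrix with entries s_{ii} = 1 + \sum_{l \ne i} (z_i - z_l)^{-2} and s_{ij} = -(z_i - z_j)^{-2} for i \ne j. Then (z_1, ..., z_N)^T is an eigenvector of S_N with eigenvalue 2. -/

import Mathlib

open Polynomial Finset Matrix

/-- The physicists' Hermite polynomials, orthogonal w.r.t. the weight `e^{-x^2}`. -/
noncomputable def physHermite : ℕ → Polynomial ℝ
  | 0 => 1
  | 1 => 2 * X
  | n + 2 => 2 * X * physHermite (n + 1) - C (2 * ((n : ℝ) + 1)) * physHermite n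

lemma pH0 : physHermite 0 = 1 := rfl
lemma pH1 : physHermite 1 = 2 * X := rfl
lemma pH2 (n : ℕ) : physHermite (n + 2) =
    2 * X * physHermite (n + 1) - C (2 * ((n : ℝ) + 1)) * physHermite n := rfl

lemma pH_succ (n : ℕ) : physHermite (n + 1) =
    2 * X * physHermite n - C (2 * (n : ℝ)) * physHermite (n - 1) := by
  cases n with
  | zero => simp [pH0, pH1]
  | succ m => rw [pH2]; push_cast; ring_nf

lemma pH_deriv (n : ℕ) : derivative (physHermite n) = C (2 * (n : ℝ)) * physHermite (n - 1) := by
  induction n using Nat.twoStepInduction with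
  | zero => simp [pH0]
  | one => simp [pH1, pH0, map_ofNat]
  | more m ih1 ih2 =>
    rw [pH2]
    simp only [derivative_sub, derivative_mul, derivative_C, derivative_X, ih1, ih2,
      show m + 2 - 1 = m + 1 from rfl, show m + 1 - 1 = m from rfl, derivative_ofNat]
    rw [pH_succ m]
    push_cast
    simp only [_root_.map_mul, _root_.map_add, _root_.map_one, map_ofNat, Polynomial.C_eq_natCast]
    ring

lemma pH_ode (n : ℕ) : derivative (derivative (physHermite n)) =
    2 * X * derivative (physHermite n) - C (2 * (n : ℝ)) * physHermite n := by
  cases n with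
  | zero => simp [pH0]
  | succ m =>
    rw [pH_deriv (m + 1), show m + 1 - 1 = m from rfl]
    rw [derivative_mul, derivative_C, pH_deriv m]
    rw [pH_succ m]
    push_cast
    simp only [Polynomial.C_eq_natCast, _root_.map_mul, _root_.map_add, _root_.map_one,
      map_ofNat]
    ring

lemma pH_natDegree_le (n : ℕ) : (physHermite n).natDegree ≤ n := by
  induction n using Nat.twoStepInduction with
  | zero => simp [pH0]
  | one => simpa [pH1] using natDegree_C_mul_le 2 X
  | more m ih1 ih2 =>
    rw [pH2]
    refine (natDegree_sub_le _ _).trans (max_le ?_ ?_)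
    · calc (2 * X * physHermite (m+1)).natDegree ≤ (2*X : ℝ[X]).natDegree + (physHermite (m+1)).natDegree :=
        natDegree_mul_le
      _ ≤ 1 + (m + 1) := by
          gcongr
          simpa using natDegree_C_mul_le (2:ℝ) X
      _ = m + 2 := by omega
    · exact (natDegree_C_mul_le _ _).trans (by omega)

lemma pH_coeff (n : ℕ) : (physHermite n).coeff n = 2 ^ n := by
  induction n using Nat.twoStepInduction with
  | zero => simp [pH0]
  | one => simp [pH1]
  | more m ih1 ih2 =>
    rw [pH2]
    have h0 : (physHermite m).coeff (m + 2) = 0 :=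
      coeff_eq_zero_of_natDegree_lt (by have := pH_natDegree_le m; omega)
    rw [coeff_sub, coeff_C_mul, h0, mul_zero, sub_zero]
    have : (2 * X * physHermite (m+1)) = C 2 * (X * physHermite (m+1)) := by
      rw [map_ofNat]; ring
    rw [this, coeff_C_mul, coeff_X_mul, ih2]
    ring

lemma derivative_finset_prod {ι : Type*} [DecidableEq ι] (s : Finset ι) (f : ι → Polynomial ℝ) :
    derivative (∏ i ∈ s, f i) = ∑ i ∈ s, (∏ j ∈ s.erase i, f j) * derivative (f i) := by
  induction s using Finset.induction_on with
  | empty => simp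
  | insert a s ha ih =>
    rw [Finset.prod_insert ha, derivative_mul, ih, Finset.sum_insert ha,
      Finset.erase_insert ha, Finset.mul_sum]
    have key : ∀ i ∈ s, (∏ j ∈ (insert a s).erase i, f j) * derivative (f i) =
        f a * ((∏ j ∈ s.erase i, f j) * derivative (f i)) := by
      intro i hi
      rw [Finset.erase_insert_of_ne (fun h : a = i => ha (h.symm ▸ hi)), Finset.prod_insert
        (fun h => ha (Finset.mem_of_mem_erase h))]
      ring
    rw [Finset.sum_congr rfl key]
    ring

lemma pH_factor (N : ℕ) (z : Fin N → ℝ) (hinj : Function.Injective z)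
    (hroot : ∀ i, (physHermite N).eval (z i) = 0) :
    physHermite N = C ((2:ℝ)^N) * ∏ i : Fin N, (X - C (z i)) := by
  set P : ℝ[X] := ∏ i : Fin N, (X - C (z i)) with hP
  have hPm : P.Monic := monic_prod_of_monic _ _ (fun i _ => monic_X_sub_C _)
  have hPd : P.natDegree = N := by
    rw [hP, natDegree_prod_of_monic _ _ (fun i _ => monic_X_sub_C _)]
    simp
  set Q : ℝ[X] := physHermite N - C ((2:ℝ)^N) * P with hQ
  have heval : ∀ i, Q.eval (z i) = 0 := by
    intro i
    rw [hQ, eval_sub, hroot i, eval_mul, eval_C, hP, eval_prod]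
    rw [Finset.prod_eq_zero (Finset.mem_univ i) (by simp)]
    ring
  have hQd : Q.natDegree ≤ N := by
    refine (natDegree_sub_le _ _).trans (max_le (pH_natDegree_le N) ?_)
    exact (natDegree_C_mul_le _ _).trans hPd.le
  have hQc : Q.coeff N = 0 := by
    rw [hQ, coeff_sub, pH_coeff, coeff_C_mul, ← hPd, hPm.coeff_natDegree]
    ring
  have hQ0 : Q = 0 := by
    by_contra h
    refine h (eq_zero_of_natDegree_lt_card_of_eval_eq_zero Q hinj heval ?_)
    rw [Fintype.card_fin]
    rcases lt_or_eq_of_le hQd with h'|h'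
    · exact h'
    · exact absurd (by rw [leadingCoeff, h']; exact hQc) (mt leadingCoeff_eq_zero.mp h)
  exact sub_eq_zero.mp hQ0

lemma pH_key (N : ℕ) (z : Fin N → ℝ) (hinj : Function.Injective z)
    (hroot : ∀ i, (physHermite N).eval (z i) = 0) (i : Fin N) :
    ∑ k ∈ Finset.univ.erase i, (z i - z k)⁻¹ = z i := by
  have hzz : ∀ j k : Fin N, j ≠ k → z j - z k ≠ 0 :=
    fun j k h => sub_ne_zero.mpr (fun e => h (hinj e))
  set P : ℝ[X] := ∏ j : Fin N, (X - C (z j)) with hP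
  have hfac := pH_factor N z hinj hroot
  have hdP : derivative P = ∑ j : Fin N, ∏ k ∈ Finset.univ.erase j, (X - C (z k)) := by
    rw [hP, derivative_finset_prod]
    simp
  have hdP_eval : eval (z i) (derivative P) = ∏ k ∈ Finset.univ.erase i, (z i - z k) := by
    rw [hdP, eval_finset_sum, Finset.sum_eq_single i]
    · simp [eval_prod]
    · intro j _ hji
      rw [eval_prod]
      exact Finset.prod_eq_zero (Finset.mem_erase.mpr ⟨hji.symm, Finset.mem_univ _⟩) (by simp)
    · simp
  have hd2P_eval : eval (z i) (derivative (derivative P)) =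
      2 * ∑ k ∈ Finset.univ.erase i, ∏ l ∈ (Finset.univ.erase i).erase k, (z i - z l) := by
    rw [hdP, derivative_sum]
    simp only [derivative_finset_prod, derivative_sub, derivative_X, derivative_C, sub_zero,
      mul_one]
    rw [eval_finset_sum]
    have hterm : ∀ j : Fin N, eval (z i) (∑ k ∈ (Finset.univ.erase j),
        ∏ l ∈ (Finset.univ.erase j).erase k, (X - C (z l))) =
        if j = i then ∑ k ∈ Finset.univ.erase i,
            ∏ l ∈ (Finset.univ.erase i).erase k, (z i - z l)
        else ∏ l ∈ (Finset.univ.erase i).erase j, (z i - z l) := by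
      intro j
      rw [eval_finset_sum]
      split_ifs with hj
      · subst hj
        refine Finset.sum_congr rfl fun k _ => by simp [eval_prod]
      · rw [Finset.sum_eq_single i]
        · rw [eval_prod, Finset.erase_right_comm]
          exact Finset.prod_congr rfl (by simp)
        · intro k hk hki
          rw [eval_prod]
          refine Finset.prod_eq_zero (Finset.mem_erase.mpr ⟨hki.symm,
            Finset.mem_erase.mpr ⟨fun h => hj h.symm, Finset.mem_univ _⟩⟩) (by simp)
        · intro h
          exact absurd (Finset.mem_erase.mpr ⟨fun h' => hj h'.symm, Finset.mem_univ _⟩) h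
    simp only [hterm]
    rw [← Finset.add_sum_erase _ _ (Finset.mem_univ i), if_pos rfl,
      Finset.sum_congr rfl (fun x hx => if_neg (Finset.mem_erase.mp hx).1)]
    ring
  have hPz : eval (z i) P = 0 := by
    rw [hP, eval_prod]
    exact Finset.prod_eq_zero (Finset.mem_univ i) (by simp)
  have h1 : derivative (C ((2:ℝ)^N) * P) = C ((2:ℝ)^N) * derivative P := by
    rw [derivative_mul, derivative_C]; ring
  have h2 : derivative (C ((2:ℝ)^N) * derivative P) = C ((2:ℝ)^N) * derivative (derivative P) := by
    rw [derivative_mul, derivative_C]; ring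
  have hode := congrArg (eval (z i)) (pH_ode N)
  rw [hfac, ← hP, h1, h2] at hode
  simp only [eval_mul, eval_sub, eval_C, eval_X, eval_ofNat, hPz, hdP_eval, hd2P_eval,
    mul_zero] at hode
  have hA : (∏ k ∈ Finset.univ.erase i, (z i - z k)) ≠ 0 :=
    Finset.prod_ne_zero_iff.mpr (fun k hk => hzz i k (Ne.symm (Finset.mem_erase.mp hk).1))
  have hB : ∑ k ∈ Finset.univ.erase i, ∏ l ∈ (Finset.univ.erase i).erase k, (z i - z l) =
      (∏ k ∈ Finset.univ.erase i, (z i - z k)) * ∑ k ∈ Finset.univ.erase i, (z i - z k)⁻¹ := by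
    rw [Finset.mul_sum]
    refine Finset.sum_congr rfl fun k hk => ?_
    have h := Finset.mul_prod_erase _ (fun l => z i - z l) hk
    have hne := hzz i k (Ne.symm (Finset.mem_erase.mp hk).1)
    rw [← h]
    field_simp
  rw [hB] at hode
  have hc : ((2:ℝ)^N) ≠ 0 := by positivity
  have h3 : (2 * (2:ℝ)^N * ∏ k ∈ Finset.univ.erase i, (z i - z k)) *
      ((∑ k ∈ Finset.univ.erase i, (z i - z k)⁻¹) - z i) = 0 := by linear_combination hode
  have h4 : (2 * (2:ℝ)^N * ∏ k ∈ Finset.univ.erase i, (z i - z k)) ≠ 0 :=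
    mul_ne_zero (mul_ne_zero two_ne_zero hc) hA
  exact sub_eq_zero.mp ((mul_eq_zero.mp h3).resolve_left h4)

theorem stmt_6 (N : ℕ) (hN : 2 ≤ N) (z : Fin N → ℝ)
    (hord : ∀ i j : Fin N, i < j → z j < z i)
    (hroot : ∀ i, (physHermite N).eval (z i) = 0)
    (S : Matrix (Fin N) (Fin N) ℝ)
    (hS : ∀ i j, S i j = if i = j
      then 1 + ∑ l ∈ Finset.univ.erase i, ((z i - z l) ^ 2)⁻¹
      else -((z i - z j) ^ 2)⁻¹) :
    S.mulVec z = (2 : ℝ) • z ∧ z ≠ 0 := by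
  have hinj : Function.Injective z := by
    intro a b h
    by_contra hne
    rcases Ne.lt_or_gt hne with h'|h'
    · exact (hord a b h').ne h.symm
    · exact (hord b a h').ne h
  have hzz : ∀ j k : Fin N, j ≠ k → z j - z k ≠ 0 :=
    fun j k h => sub_ne_zero.mpr (fun e => h (hinj e))
  constructor
  · funext i
    have key := pH_key N z hinj hroot i
    show ∑ j : Fin N, S i j * z j = 2 * z i
    have hoff : ∑ j ∈ Finset.univ.erase i, S i j * z j
        = ∑ j ∈ Finset.univ.erase i, -((z i - z j) ^ 2)⁻¹ * z j :=
      Finset.sum_congr rfl (fun j hj => by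
        rw [hS i j, if_neg (Ne.symm (Finset.mem_erase.mp hj).1)])
    rw [← Finset.add_sum_erase _ _ (Finset.mem_univ i), hS i i, if_pos rfl, add_mul, one_mul,
      Finset.sum_mul, hoff, add_assoc, ← Finset.sum_add_distrib]
    have hsum : ∑ j ∈ Finset.univ.erase i,
        (((z i - z j)^2)⁻¹ * z i + -((z i - z j)^2)⁻¹ * z j) =
        ∑ j ∈ Finset.univ.erase i, (z i - z j)⁻¹ := by
      refine Finset.sum_congr rfl fun j hj => ?_
      have hne := hzz i j (Ne.symm (Finset.mem_erase.mp hj).1)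
      field_simp
      ring
    rw [hsum, key]
    ring
  · intro h0
    have h01 : (⟨0, by omega⟩ : Fin N) < ⟨1, by omega⟩ := by simp [Fin.lt_def]
    have := hord _ _ h01
    rw [h0] at this
    simp at this
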